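/- Let D > 0 and suppose β₁,…,β_k and γ are elements of l̂ × l̂ with C_n(β_i) ≤ Dⁿ and C_n(γ) ≤ Dⁿ for all n ≥ 1. Then for all n ≥ 1, C_n(ad_{β_k} ⋯ ad_{β_1} γ) ≤ (2n²)^k / (2k−1)!! · Dⁿ, where (2k−1)!! = (2k−1)(2k−3)⋯1 and the adjoint action ad_β = [β,·] is taken with respect to the modified bracket [β,γ] = L_β γ − L_γ β + [β,γ]_0. -/

import Mathlib

noncomputable section
open Nat

/-- The free Lie algebra `l` on two generators `x = of true`, `y = of false`. -/
abbrev FL : Type := FreeLieAlgebra ℝ Bool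

/-- `IsLieWord n u`: `u` is a Lie word of length `n`. -/
inductive IsLieWord : ℕ → FL → Prop
  | of (b : Bool) : IsLieWord 1 (FreeLieAlgebra.of ℝ b)
  | lie {m n : ℕ} {u v : FL} : IsLieWord m u → IsLieWord n v → IsLieWord (m + n) ⁅u, v⁆

/-- `l` is homogeneous of degree `n`. -/
def Homog (n : ℕ) (l : FL) : Prop := l ∈ Submodule.span ℝ {u : FL | IsLieWord n u}

/-- The norm `C_n(l)`. -/
def Cn (n : ℕ) (l : FL) : ℝ :=
  sInf {s : ℝ | ∃ (m : ℕ) (c : Fin m → ℝ) (w : Fin m → FL),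
    (∀ i, IsLieWord n (w i)) ∧ l = ∑ i, c i • w i ∧ s = ∑ i, |c i|}

def HomogP (n : ℕ) (p : FL × FL) : Prop := Homog n p.1 ∧ Homog n p.2

def CnP (n : ℕ) (p : FL × FL) : ℝ := max (Cn n p.1) (Cn n p.2)

/-- The modified bracket, extended degreewise to elements of the completion `l̂ × l̂`
(given by their homogeneous components `ℕ → FL × FL`). -/
def brFam (br : FL × FL → FL × FL → FL × FL) (a c : ℕ → FL × FL) : ℕ → FL × FL :=
  fun n => ∑ p ∈ Finset.HasAntidiagonal.antidiagonal n, br (a p.1) (c p.2)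

/-- Iterated adjoint action `ad_{β_k} ⋯ ad_{β_1} γ` (with `bs = [β₁, …, β_k]`). -/
def adIter (br : FL × FL → FL × FL → FL × FL)
    (bs : List (ℕ → FL × FL)) (γ : ℕ → FL × FL) : ℕ → FL × FL :=
  bs.foldl (fun acc β => brFam br β acc) γ

lemma word_len_pos {n : ℕ} {u : FL} (h : IsLieWord n u) : 1 ≤ n := by
  induction h <;> omega

lemma word_homog {n : ℕ} {w : FL} (h : IsLieWord n w) : Homog n w :=
  Submodule.subset_span h

lemma homog_zero {l : FL} (h : Homog 0 l) : l = 0 := by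
  have he : {u : FL | IsLieWord 0 u} = ∅ := by
    ext u
    simp only [Set.mem_setOf_eq, Set.mem_empty_iff_false, iff_false]
    intro hu
    exact absurd (word_len_pos hu) (by omega)
  rw [Homog, he, Submodule.span_empty, Submodule.mem_bot] at h
  exact h

lemma Homog.lie {m p : ℕ} {u v : FL} (hu : Homog m u) (hv : Homog p v) :
    Homog (m + p) ⁅u, v⁆ := by
  induction hu using Submodule.span_induction with
  | mem x hx =>
    induction hv using Submodule.span_induction with
    | mem y hy => exact word_homog (IsLieWord.lie hx hy)
    | zero => rw [lie_zero]; exact Submodule.zero_mem _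
    | add y z _ _ hy hz => rw [lie_add]; exact Submodule.add_mem _ hy hz
    | smul a y _ hy => rw [lie_smul]; exact Submodule.smul_mem _ a hy
  | zero => rw [zero_lie]; exact Submodule.zero_mem _
  | add x y _ _ hx hy => rw [add_lie]; exact Submodule.add_mem _ hx hy
  | smul a x _ hx => rw [smul_lie]; exact Submodule.smul_mem _ a hx

lemma cnset_nonneg {n : ℕ} {l : FL} {s : ℝ}
    (hs : s ∈ {s : ℝ | ∃ (m : ℕ) (c : Fin m → ℝ) (w : Fin m → FL),
    (∀ i, IsLieWord n (w i)) ∧ l = ∑ i, c i • w i ∧ s = ∑ i, |c i|}) : 0 ≤ s := by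
  obtain ⟨m, c, w, -, -, rfl⟩ := hs
  exact Finset.sum_nonneg fun i _ => abs_nonneg _

lemma Cn_nonneg (n : ℕ) (l : FL) : 0 ≤ Cn n l :=
  Real.sInf_nonneg fun s hs => cnset_nonneg hs

lemma Cn_le {n : ℕ} {l : FL} {m : ℕ} (c : Fin m → ℝ) (w : Fin m → FL)
    (hw : ∀ i, IsLieWord n (w i)) (hl : l = ∑ i, c i • w i) :
    Cn n l ≤ ∑ i, |c i| :=
  csInf_le ⟨0, fun s hs => cnset_nonneg hs⟩ ⟨m, c, w, hw, hl, rfl⟩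

lemma Cn_le' {n : ℕ} {l : FL} {ι : Type} [Fintype ι] (c : ι → ℝ) (w : ι → FL)
    (hw : ∀ i, IsLieWord n (w i)) (hl : l = ∑ i, c i • w i) :
    Cn n l ≤ ∑ i, |c i| := by
  have e := (Fintype.equivFin ι).symm
  have h1 : l = ∑ i, (c ∘ e) i • (w ∘ e) i := by
    rw [hl]; exact (Equiv.sum_comp e fun i => c i • w i).symm
  have h2 : (∑ i, |c i|) = ∑ i, |(c ∘ e) i| := (Equiv.sum_comp e fun i => |c i|).symm
  rw [h2]
  exact Cn_le (c ∘ e) (w ∘ e) (fun i => hw _) h1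

lemma Cn_zero (n : ℕ) : Cn n (0 : FL) = 0 := by
  refine le_antisymm ?_ (Cn_nonneg n 0)
  have := Cn_le (n := n) (l := 0) (m := 0) (fun i => 0) (fun i => 0) (fun i => i.elim0) (by simp)
  simpa using this

lemma homog_iff {n : ℕ} {l : FL} : Homog n l ↔ ∃ (m : ℕ) (c : Fin m → ℝ) (w : Fin m → FL),
    (∀ i, IsLieWord n (w i)) ∧ l = ∑ i, c i • w i := by
  constructor
  · intro h
    obtain ⟨m, f, g, hsum⟩ := Submodule.mem_span_set'.1 h
    exact ⟨m, f, fun i => (g i : FL), fun i => (g i).2, hsum.symm⟩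
  · rintro ⟨m, c, w, hw, rfl⟩
    exact Submodule.sum_mem _ fun i _ => Submodule.smul_mem _ _ (word_homog (hw i))

lemma Cn_exists {n : ℕ} {l : FL} (h : Homog n l) {ε : ℝ} (hε : 0 < ε) :
    ∃ (m : ℕ) (c : Fin m → ℝ) (w : Fin m → FL),
      (∀ i, IsLieWord n (w i)) ∧ l = ∑ i, c i • w i ∧ ∑ i, |c i| < Cn n l + ε := by
  obtain ⟨m, c, w, hw, hl⟩ := homog_iff.1 h
  have hne : {s : ℝ | ∃ (m : ℕ) (c : Fin m → ℝ) (w : Fin m → FL),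
      (∀ i, IsLieWord n (w i)) ∧ l = ∑ i, c i • w i ∧ s = ∑ i, |c i|}.Nonempty :=
    ⟨_, m, c, w, hw, hl, rfl⟩
  obtain ⟨a, ha, hlt⟩ := Real.lt_sInf_add_pos hne hε
  obtain ⟨m', c', w', hw', hl', rfl⟩ := ha
  exact ⟨m', c', w', hw', hl', hlt⟩

section Aux

lemma Cn_le_add {n : ℕ} {l : FL} {B : ℝ} (h : ∀ ε : ℝ, 0 < ε → Cn n l ≤ B + ε) :
    Cn n l ≤ B :=
  le_of_forall_pos_le_add h

lemma Cn_add {n : ℕ} {a b : FL} (ha : Homog n a) (hb : Homog n b) :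
    Cn n (a + b) ≤ Cn n a + Cn n b := by
  apply Cn_le_add
  intro ε hε
  obtain ⟨m1, c1, w1, hw1, hl1, hs1⟩ := Cn_exists ha (half_pos hε)
  obtain ⟨m2, c2, w2, hw2, hl2, hs2⟩ := Cn_exists hb (half_pos hε)
  have hsum : a + b = ∑ i : Fin (m1 + m2), Fin.append c1 c2 i • Fin.append w1 w2 i := by
    rw [Fin.sum_univ_add]
    simp only [Fin.append_left, Fin.append_right]
    rw [← hl1, ← hl2]
  have hword : ∀ i : Fin (m1 + m2), IsLieWord n (Fin.append w1 w2 i) := by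
    intro i
    refine Fin.addCases (fun i => ?_) (fun i => ?_) i
    · rw [Fin.append_left]; exact hw1 i
    · rw [Fin.append_right]; exact hw2 i
  have := Cn_le _ _ hword hsum
  rw [Fin.sum_univ_add] at this
  simp only [Fin.append_left, Fin.append_right] at this
  linarith

lemma Cn_smul {n : ℕ} (r : ℝ) {l : FL} (h : Homog n l) :
    Cn n (r • l) ≤ |r| * Cn n l := by
  apply Cn_le_add
  intro ε hε
  have hεpos : 0 < ε / (|r| + 1) := by positivity
  obtain ⟨m, c, w, hw, hl, hs⟩ := Cn_exists h hεpos
  have hsum : r • l = ∑ i, (r * c i) • w i := by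
    rw [hl, Finset.smul_sum]
    simp [mul_smul]
  have := Cn_le _ _ hw hsum
  have h2 : (∑ i, |r * c i|) = |r| * ∑ i, |c i| := by
    rw [Finset.mul_sum]; simp [abs_mul]
  rw [h2] at this
  have hr : 0 ≤ |r| := abs_nonneg r
  have h3 : |r| * (∑ i, |c i|) ≤ |r| * (Cn n l + ε / (|r| + 1)) :=
    mul_le_mul_of_nonneg_left hs.le hr
  have h4 : |r| * (ε / (|r| + 1)) ≤ ε := by
    rw [mul_div_assoc']
    rw [div_le_iff₀ (by positivity)]
    nlinarith
  nlinarith [this]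

lemma Cn_neg {n : ℕ} {l : FL} (h : Homog n l) : Cn n (-l) ≤ Cn n l := by
  have := Cn_smul (-1 : ℝ) h
  simpa using this

lemma sum_lie' {ι : Type*} (s : Finset ι) (f : ι → FL) (b : FL) :
    ⁅∑ i ∈ s, f i, b⁆ = ∑ i ∈ s, ⁅f i, b⁆ := by
  classical
  induction s using Finset.induction_on with
  | empty => simp
  | @insert a s ha ih => rw [Finset.sum_insert ha, Finset.sum_insert ha, add_lie, ih]

lemma lie_sum' {ι : Type*} (s : Finset ι) (a : FL) (f : ι → FL) :
    ⁅a, ∑ i ∈ s, f i⁆ = ∑ i ∈ s, ⁅a, f i⁆ := by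
  classical
  induction s using Finset.induction_on with
  | empty => simp
  | @insert b s hb ih => rw [Finset.sum_insert hb, Finset.sum_insert hb, lie_add, ih]

lemma Cn_lie {m p : ℕ} {u v : FL} (hu : Homog m u) (hv : Homog p v) :
    Cn (m + p) ⁅u, v⁆ ≤ Cn m u * Cn p v := by
  apply Cn_le_add
  intro δ hδ
  set A := Cn m u with hA
  set B := Cn p v with hB
  have hA0 : 0 ≤ A := Cn_nonneg _ _
  have hB0 : 0 ≤ B := Cn_nonneg _ _
  set ε : ℝ := min 1 (δ / (A + B + 1)) with hεdef
  have hε : 0 < ε := lt_min one_pos (by positivity)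
  obtain ⟨m1, c, w, hw, hlu, hsu⟩ := Cn_exists hu hε
  obtain ⟨m2, d, z, hz, hlv, hsv⟩ := Cn_exists hv hε
  have hsum : ⁅u, v⁆ = ∑ ij : Fin m1 × Fin m2, (c ij.1 * d ij.2) • ⁅w ij.1, z ij.2⁆ := by
    rw [hlu, hlv, Fintype.sum_prod_type]
    rw [sum_lie']
    refine Finset.sum_congr rfl fun i _ => ?_
    rw [smul_lie, lie_sum', Finset.smul_sum]
    refine Finset.sum_congr rfl fun j _ => ?_
    rw [lie_smul, smul_smul]
  have hword : ∀ ij : Fin m1 × Fin m2, IsLieWord (m + p) ⁅w ij.1, z ij.2⁆ :=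
    fun ij => IsLieWord.lie (hw ij.1) (hz ij.2)
  have hle := Cn_le' _ _ hword hsum
  have hprod : (∑ ij : Fin m1 × Fin m2, |c ij.1 * d ij.2|) = (∑ i, |c i|) * (∑ j, |d j|) := by
    rw [Fintype.sum_prod_type, Finset.sum_mul_sum]
    simp [abs_mul]
  rw [hprod] at hle
  have h1 : (∑ i, |c i|) * (∑ j, |d j|) ≤ (A + ε) * (B + ε) := by
    apply mul_le_mul hsu.le hsv.le (Finset.sum_nonneg fun j _ => abs_nonneg _) (by linarith)
  have hε1 : ε ≤ 1 := min_le_left _ _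
  have hε2 : ε ≤ δ / (A + B + 1) := min_le_right _ _
  have hε3 : ε * (A + B + 1) ≤ δ := by
    rw [← le_div_iff₀ (by positivity : (0:ℝ) < A + B + 1)]
    exact hε2
  nlinarith [hle]

lemma Cn_word_le_one {n : ℕ} {w : FL} (h : IsLieWord n w) : Cn n w ≤ 1 := by
  have := Cn_le' (ι := Fin 1) (fun _ => (1 : ℝ)) (fun _ => w) (fun _ => h) (by rw [Fin.sum_univ_one, one_smul])
  simpa using this

lemma Cn_finsum {ι : Type*} {n : ℕ} (s : Finset ι) (f : ι → FL)
    (h : ∀ i ∈ s, Homog n (f i)) :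
    Homog n (∑ i ∈ s, f i) ∧ Cn n (∑ i ∈ s, f i) ≤ ∑ i ∈ s, Cn n (f i) := by
  classical
  induction s using Finset.induction_on with
  | empty => simp [Cn_zero]; exact Submodule.zero_mem _
  | @insert a s ha ih =>
    have hfa := h a (Finset.mem_insert_self a s)
    have ihs := ih fun i hi => h i (Finset.mem_insert_of_mem hi)
    rw [Finset.sum_insert ha, Finset.sum_insert ha]
    refine ⟨Submodule.add_mem _ hfa ihs.1, ?_⟩
    calc Cn n (f a + ∑ i ∈ s, f i) ≤ Cn n (f a) + Cn n (∑ i ∈ s, f i) := Cn_add hfa ihs.1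
    _ ≤ Cn n (f a) + ∑ i ∈ s, Cn n (f i) := by linarith [ihs.2]

lemma Cn_sum_smul {ι : Type*} {n : ℕ} (s : Finset ι) (c : ι → ℝ) (v : ι → FL)
    (h : ∀ i ∈ s, Homog n (v i)) :
    Homog n (∑ i ∈ s, c i • v i) ∧ Cn n (∑ i ∈ s, c i • v i) ≤ ∑ i ∈ s, |c i| * Cn n (v i) := by
  have h1 := Cn_finsum s (fun i => c i • v i) (fun i hi => Submodule.smul_mem _ _ (h i hi))
  refine ⟨h1.1, h1.2.trans ?_⟩
  exact Finset.sum_le_sum fun i hi => Cn_smul (c i) (h i hi)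

lemma der_word (T : LieDerivation ℝ FL FL) (m : ℕ) (K : ℝ) (hK : 0 ≤ K)
    (hgen : ∀ b : Bool, Homog (m + 1) (T (FreeLieAlgebra.of ℝ b)) ∧
      Cn (m + 1) (T (FreeLieAlgebra.of ℝ b)) ≤ K) :
    ∀ {p : ℕ} {w : FL}, IsLieWord p w → Homog (m + p) (T w) ∧ Cn (m + p) (T w) ≤ p * K := by
  intro p w h
  induction h with
  | of b => simpa using hgen b
  | @lie p q u v hu hv ihu ihv =>
    have happ : T ⁅u, v⁆ = ⁅u, T v⁆ + ⁅T u, v⁆ := T.apply_lie_eq_add u v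
    have hhu : Homog p u := word_homog hu
    have hhv : Homog q v := word_homog hv
    have h1 : Homog (m + (p + q)) ⁅T u, v⁆ := by
      have := ihu.1.lie hhv
      rwa [show m + p + q = m + (p + q) by omega] at this
    have h2 : Homog (m + (p + q)) ⁅u, T v⁆ := by
      have := hhu.lie ihv.1
      rwa [show p + (m + q) = m + (p + q) by omega] at this
    constructor
    · rw [happ]; exact Submodule.add_mem _ h2 h1
    · rw [happ]
      have c1 : Cn (m + (p + q)) ⁅T u, v⁆ ≤ p * K := by
        have := Cn_lie ihu.1 hhv
        rw [show m + p + q = m + (p + q) by omega] at this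
        refine this.trans ?_
        calc Cn (m + p) (T u) * Cn q v ≤ (p * K) * 1 :=
              mul_le_mul ihu.2 (Cn_word_le_one hv) (Cn_nonneg _ _) (by positivity)
        _ = p * K := by ring
      have c2 : Cn (m + (p + q)) ⁅u, T v⁆ ≤ q * K := by
        have := Cn_lie hhu ihv.1
        rw [show p + (m + q) = m + (p + q) by omega] at this
        refine this.trans ?_
        calc Cn p u * Cn (m + q) (T v) ≤ 1 * (q * K) :=
              mul_le_mul (Cn_word_le_one hu) ihv.2 (Cn_nonneg _ _) (by norm_num)
        _ = q * K := by ring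
      have := Cn_add h2 h1
      push_cast
      nlinarith [this]

lemma der_apply (T : LieDerivation ℝ FL FL) (m : ℕ) (K : ℝ) (hK : 0 ≤ K)
    (hgen : ∀ b : Bool, Homog (m + 1) (T (FreeLieAlgebra.of ℝ b)) ∧
      Cn (m + 1) (T (FreeLieAlgebra.of ℝ b)) ≤ K)
    {p : ℕ} {l : FL} (hl : Homog p l) :
    Homog (m + p) (T l) ∧ Cn (m + p) (T l) ≤ p * K * Cn p l := by
  have key : ∀ (mm : ℕ) (c : Fin mm → ℝ) (w : Fin mm → FL), (∀ i, IsLieWord p (w i)) →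
      l = ∑ i, c i • w i → Homog (m + p) (T l) ∧ Cn (m + p) (T l) ≤ (∑ i, |c i|) * (p * K) := by
    intro mm c w hw hsum
    have hTl : T l = ∑ i, c i • T (w i) := by
      rw [hsum, map_sum]
      exact Finset.sum_congr rfl fun i _ => by rw [map_smul]
    have hword := fun i => der_word T m K hK hgen (hw i)
    have h1 := Cn_sum_smul Finset.univ c (fun i => T (w i)) (fun i _ => (hword i).1)
    rw [← hTl] at h1
    refine ⟨h1.1, h1.2.trans ?_⟩
    rw [Finset.sum_mul]
    exact Finset.sum_le_sum fun i _ =>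
      mul_le_mul_of_nonneg_left (hword i).2 (abs_nonneg _)
  obtain ⟨mm, c, w, hw, hsum⟩ := homog_iff.1 hl
  refine ⟨(key mm c w hw hsum).1, ?_⟩
  apply Cn_le_add
  intro ε hε
  have hεpos : 0 < ε / (p * K + 1) := by positivity
  obtain ⟨m', c', w', hw', hl', hs'⟩ := Cn_exists hl hεpos
  have h2 := (key m' c' w' hw' hl').2
  have hpK : (0:ℝ) ≤ p * K := by positivity
  have h3 : (∑ i, |c' i|) * (p * K) ≤ (Cn p l + ε / (p * K + 1)) * (p * K) :=
    mul_le_mul_of_nonneg_right hs'.le hpK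
  have h4 : (ε / (p * K + 1)) * (p * K) ≤ ε := by
    rw [div_mul_eq_mul_div, div_le_iff₀ (by positivity)]
    nlinarith
  nlinarith [h2]

lemma CnP_nonneg (n : ℕ) (q : FL × FL) : 0 ≤ CnP n q :=
  le_max_of_le_left (Cn_nonneg _ _)

lemma CnP_zero_pair (n : ℕ) : CnP n ((0 : FL), (0 : FL)) = 0 := by
  simp [CnP, Cn_zero]

variable {Lb : FL × FL → LieDerivation ℝ FL FL}
  {br : FL × FL → FL × FL → FL × FL}

lemma br_est
    (hLbx : ∀ β : FL × FL, Lb β (FreeLieAlgebra.of ℝ true) = ⁅β.1, FreeLieAlgebra.of ℝ true⁆)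
    (hLby : ∀ β : FL × FL, Lb β (FreeLieAlgebra.of ℝ false) = ⁅β.2, FreeLieAlgebra.of ℝ false⁆)
    (hbr : ∀ β γ : FL × FL, br β γ =
      (Lb β γ.1 - Lb γ β.1 + ⁅β.1, γ.1⁆, Lb β γ.2 - Lb γ β.2 + ⁅β.2, γ.2⁆))
    {m p : ℕ} {β γ : FL × FL} (hβ : HomogP m β) (hγ : HomogP p γ) :
    HomogP (m + p) (br β γ) ∧
      CnP (m + p) (br β γ) ≤ ((m : ℝ) + p + 1) * CnP m β * CnP p γ := by
  set B := CnP m β with hBdef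
  set G := CnP p γ with hGdef
  have hB0 : 0 ≤ B := CnP_nonneg _ _
  have hG0 : 0 ≤ G := CnP_nonneg _ _
  -- generator estimates for Lb δ when δ is homogeneous of degree d with CnP d δ = E
  have gen : ∀ (d : ℕ) (δ : FL × FL), HomogP d δ → ∀ b : Bool,
      Homog (d + 1) (Lb δ (FreeLieAlgebra.of ℝ b)) ∧
      Cn (d + 1) (Lb δ (FreeLieAlgebra.of ℝ b)) ≤ CnP d δ := by
    intro d δ hδ b
    have hw : IsLieWord 1 (FreeLieAlgebra.of ℝ b) := IsLieWord.of b
    cases b with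
    | true =>
      rw [hLbx]
      refine ⟨hδ.1.lie (word_homog hw), ?_⟩
      refine (Cn_lie hδ.1 (word_homog hw)).trans ?_
      calc Cn d δ.1 * Cn 1 (FreeLieAlgebra.of ℝ true) ≤ Cn d δ.1 * 1 :=
            mul_le_mul_of_nonneg_left (Cn_word_le_one hw) (Cn_nonneg _ _)
      _ = Cn d δ.1 := mul_one _
      _ ≤ CnP d δ := le_max_left _ _
    | false =>
      rw [hLby]
      refine ⟨hδ.2.lie (word_homog hw), ?_⟩
      refine (Cn_lie hδ.2 (word_homog hw)).trans ?_
      calc Cn d δ.2 * Cn 1 (FreeLieAlgebra.of ℝ false) ≤ Cn d δ.2 * 1 :=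
            mul_le_mul_of_nonneg_left (Cn_word_le_one hw) (Cn_nonneg _ _)
      _ = Cn d δ.2 := mul_one _
      _ ≤ CnP d δ := le_max_right _ _
  -- estimate for one component
  have comp : ∀ (x y : FL), Homog m x → Homog p y → Cn m x ≤ B → Cn p y ≤ G →
      Homog (m + p) (Lb β y - Lb γ x + ⁅x, y⁆) ∧
      Cn (m + p) (Lb β y - Lb γ x + ⁅x, y⁆) ≤ ((m : ℝ) + p + 1) * B * G := by
    intro x y hx hy hxB hyG
    have d1 := der_apply (Lb β) m B hB0 (fun b => gen m β hβ b) hy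
    have d2' := der_apply (Lb γ) p G hG0 (fun b => gen p γ hγ b) hx
    rw [show p + m = m + p by omega] at d2'
    have d3h : Homog (m + p) ⁅x, y⁆ := hx.lie hy
    have d3 : Cn (m + p) ⁅x, y⁆ ≤ B * G :=
      (Cn_lie hx hy).trans (mul_le_mul hxB hyG (Cn_nonneg _ _) hB0)
    have hsub : Homog (m + p) (Lb β y - Lb γ x) := by
      rw [sub_eq_add_neg]
      exact Submodule.add_mem _ d1.1 (Submodule.neg_mem _ d2'.1)
    constructor
    · exact Submodule.add_mem _ hsub d3h
    · have c1 : Cn (m + p) (Lb β y - Lb γ x) ≤ (p : ℝ) * B * G + (m : ℝ) * G * B := by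
        rw [sub_eq_add_neg]
        refine (Cn_add d1.1 (Submodule.neg_mem _ d2'.1)).trans ?_
        have := Cn_neg d2'.1
        have h1 : Cn (m + p) (Lb β y) ≤ (p : ℝ) * B * G := by
          refine d1.2.trans ?_
          exact mul_le_mul_of_nonneg_left hyG (by positivity)
        have h2 : Cn (m + p) (Lb γ x) ≤ (m : ℝ) * G * B := by
          refine d2'.2.trans ?_
          exact mul_le_mul_of_nonneg_left hxB (by positivity)
        nlinarith [this]
      refine (Cn_add hsub d3h).trans ?_
      nlinarith [c1, d3]
  have hc1 := comp β.1 γ.1 hβ.1 hγ.1 (le_max_left _ _) (le_max_left _ _)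
  have hc2 := comp β.2 γ.2 hβ.2 hγ.2 (le_max_right _ _) (le_max_right _ _)
  rw [hbr β γ]
  exact ⟨⟨hc1.1, hc2.1⟩, max_le hc1.2 hc2.2⟩

lemma CnP_finsum {ι : Type*} {n : ℕ} (s : Finset ι) (F : ι → FL × FL)
    (h : ∀ i ∈ s, HomogP n (F i)) :
    HomogP n (∑ i ∈ s, F i) ∧ CnP n (∑ i ∈ s, F i) ≤ ∑ i ∈ s, CnP n (F i) := by
  have e1 : (∑ i ∈ s, F i).1 = ∑ i ∈ s, (F i).1 := Prod.fst_sum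
  have e2 : (∑ i ∈ s, F i).2 = ∑ i ∈ s, (F i).2 := Prod.snd_sum
  have h1 := Cn_finsum s (fun i => (F i).1) (fun i hi => (h i hi).1)
  have h2 := Cn_finsum s (fun i => (F i).2) (fun i hi => (h i hi).2)
  refine ⟨⟨by rw [e1]; exact h1.1, by rw [e2]; exact h2.1⟩, ?_⟩
  have b1 : Cn n (∑ i ∈ s, F i).1 ≤ ∑ i ∈ s, CnP n (F i) := by
    rw [e1]
    exact h1.2.trans (Finset.sum_le_sum fun i _ => le_max_left _ _)
  have b2 : Cn n (∑ i ∈ s, F i).2 ≤ ∑ i ∈ s, CnP n (F i) := by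
    rw [e2]
    exact h2.2.trans (Finset.sum_le_sum fun i _ => le_max_right _ _)
  exact max_le b1 b2

lemma step
    (hLbx : ∀ β : FL × FL, Lb β (FreeLieAlgebra.of ℝ true) = ⁅β.1, FreeLieAlgebra.of ℝ true⁆)
    (hLby : ∀ β : FL × FL, Lb β (FreeLieAlgebra.of ℝ false) = ⁅β.2, FreeLieAlgebra.of ℝ false⁆)
    (hbr : ∀ β γ : FL × FL, br β γ =
      (Lb β γ.1 - Lb γ β.1 + ⁅β.1, γ.1⁆, Lb β γ.2 - Lb γ β.2 + ⁅β.2, γ.2⁆))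
    (D : ℝ) (hD : 0 < D) (β acc : ℕ → FL × FL)
    (hβh : ∀ n, HomogP n (β n)) (hβC : ∀ n, 1 ≤ n → CnP n (β n) ≤ D ^ n)
    (hah : ∀ n, HomogP n (acc n)) (f : ℕ → ℝ) (hf : ∀ q, 0 ≤ f q)
    (haC : ∀ n, 1 ≤ n → CnP n (acc n) ≤ f n * D ^ n) :
    (∀ n, HomogP n (brFam br β acc n)) ∧
    ∀ n, 1 ≤ n → CnP n (brFam br β acc n) ≤
      ((n : ℝ) + 1) * (∑ q ∈ Finset.range n, f q) * D ^ n := by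
  have hterm : ∀ n, ∀ p ∈ Finset.HasAntidiagonal.antidiagonal n, HomogP n (br (β p.1) (acc p.2)) := by
    intro n p hp
    have hpn : p.1 + p.2 = n := Finset.HasAntidiagonal.mem_antidiagonal.1 hp
    have := (br_est hLbx hLby hbr (hβh p.1) (hah p.2)).1
    rwa [hpn] at this
  refine ⟨fun n => (CnP_finsum _ _ (hterm n)).1, ?_⟩
  intro n hn
  have hβ0 : CnP 0 (β 0) = 0 := by
    have h1 := homog_zero (hβh 0).1
    have h2 := homog_zero (hβh 0).2
    simp [CnP, h1, h2, Cn_zero]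
  have ha0 : CnP 0 (acc 0) = 0 := by
    have h1 := homog_zero (hah 0).1
    have h2 := homog_zero (hah 0).2
    simp [CnP, h1, h2, Cn_zero]
  set bb : ℕ → ℝ := fun k => if k = 0 then 0 else D ^ k with hbb
  set gg : ℕ → ℝ := fun k => if k = 0 then 0 else f k * D ^ k with hgg
  have hbbn : ∀ k, 0 ≤ bb k := fun k => by
    simp only [hbb]; split <;> positivity
  have hggn : ∀ k, 0 ≤ gg k := fun k => by
    simp only [hgg]; split
    · exact le_refl 0
    · exact mul_nonneg (hf k) (by positivity)
  have hβb : ∀ k, CnP k (β k) ≤ bb k := by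
    intro k
    simp only [hbb]
    rcases Nat.eq_zero_or_pos k with rfl | hk
    · simp [hβ0]
    · rw [if_neg (by omega)]; exact hβC k hk
  have hab : ∀ k, CnP k (acc k) ≤ gg k := by
    intro k
    simp only [hgg]
    rcases Nat.eq_zero_or_pos k with rfl | hk
    · simp [ha0]
    · rw [if_neg (by omega)]; exact haC k hk
  have hbound : ∀ p ∈ Finset.HasAntidiagonal.antidiagonal n,
      CnP n (br (β p.1) (acc p.2)) ≤ ((n : ℝ) + 1) * (bb p.1 * gg p.2) := by
    intro p hp
    have hpn : p.1 + p.2 = n := Finset.HasAntidiagonal.mem_antidiagonal.1 hp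
    have h1 := (br_est hLbx hLby hbr (hβh p.1) (hah p.2)).2
    rw [hpn] at h1
    have hcast : ((p.1 : ℝ) + p.2 + 1) = (n : ℝ) + 1 := by
      push_cast [← hpn]; ring
    rw [hcast] at h1
    refine h1.trans ?_
    rw [mul_assoc]
    refine mul_le_mul_of_nonneg_left ?_ (by positivity)
    exact mul_le_mul (hβb p.1) (hab p.2) (CnP_nonneg _ _) (hbbn _)
  have hmain : CnP n (brFam br β acc n) ≤
      ∑ p ∈ Finset.HasAntidiagonal.antidiagonal n, ((n : ℝ) + 1) * (bb p.1 * gg p.2) :=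
    (CnP_finsum _ _ (hterm n)).2.trans (Finset.sum_le_sum hbound)
  obtain ⟨nm, rfl⟩ : ∃ nm, n = nm + 1 := ⟨n - 1, by omega⟩
  set n := nm + 1
  rw [Finset.Nat.sum_antidiagonal_eq_sum_range_succ_mk
    (fun ij => ((n : ℝ) + 1) * (bb ij.1 * gg ij.2)) n] at hmain
  set h : ℕ → ℝ := fun k => ((n : ℝ) + 1) * (bb k * gg (n - k)) with hh
  have e1 : ∑ k ∈ Finset.range (n + 1), h k = (∑ k ∈ Finset.range n, h (k + 1)) + h 0 :=
    Finset.sum_range_succ' h n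
  have e2 : ∑ k ∈ Finset.range n, h (k + 1) =
      (∑ k ∈ Finset.range nm, h (k + 1)) + h n := Finset.sum_range_succ (fun k => h (k + 1)) nm
  have h0 : h 0 = 0 := by simp [hh, hbb]
  have hn0 : h n = 0 := by simp [hh, hgg]
  have e3 : ∀ k ∈ Finset.range nm, h (k + 1) = ((n : ℝ) + 1) * D ^ n * f (nm - k) := by
    intro k hk
    have hk' : k < nm := Finset.mem_range.1 hk
    have hne1 : (k + 1 : ℕ) ≠ 0 := by omega
    have hne2 : (n - (k + 1) : ℕ) ≠ 0 := by omega
    simp only [hh, hbb, hgg, if_neg hne1, if_neg hne2]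
    have : n - (k + 1) = nm - k := by omega
    rw [this]
    have hpow : D ^ (k + 1) * D ^ (nm - k) = D ^ n := by
      rw [← pow_add]
      congr 1
      omega
    calc ((n:ℝ) + 1) * (D ^ (k+1) * (f (nm - k) * D ^ (nm - k)))
        = ((n:ℝ) + 1) * (D ^ (k+1) * D ^ (nm - k)) * f (nm - k) := by ring
      _ = ((n:ℝ) + 1) * D ^ n * f (nm - k) := by rw [hpow]
  have e4 : ∑ k ∈ Finset.range nm, h (k + 1) =
      ((n : ℝ) + 1) * D ^ n * ∑ k ∈ Finset.range nm, f (nm - k) := by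
    rw [Finset.mul_sum]
    exact Finset.sum_congr rfl e3
  have e5 : ∑ k ∈ Finset.range nm, f (nm - k) = ∑ k ∈ Finset.range nm, f (k + 1) := by
    have := Finset.sum_range_reflect (fun j => f (j + 1)) nm
    rw [← this]
    refine Finset.sum_congr rfl fun j hj => ?_
    have : j < nm := Finset.mem_range.1 hj
    congr 1
    omega
  have e6 : ∑ k ∈ Finset.range nm, f (k + 1) ≤ ∑ k ∈ Finset.range n, f k := by
    have := Finset.sum_range_succ' f nm
    rw [this]
    have := hf 0
    linarith
  have final : ∑ k ∈ Finset.range (n + 1), h k ≤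
      ((n : ℝ) + 1) * (∑ q ∈ Finset.range n, f q) * D ^ n := by
    rw [e1, e2, h0, hn0, add_zero, add_zero, e4, e5]
    have hc : (0:ℝ) ≤ ((n : ℝ) + 1) * D ^ n := by positivity
    calc ((n : ℝ) + 1) * D ^ n * ∑ k ∈ Finset.range nm, f (k + 1)
        ≤ ((n : ℝ) + 1) * D ^ n * ∑ k ∈ Finset.range n, f k := by
          rw [← e5]; rw [e5]; exact mul_le_mul_of_nonneg_left e6 hc
      _ = ((n : ℝ) + 1) * (∑ q ∈ Finset.range n, f q) * D ^ n := by ring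
  exact hmain.trans final

lemma bin_aux (m : ℕ) (x : ℝ) (hx : 0 ≤ x) :
    x ^ (m + 1) + (m + 1) * x ^ m ≤ (x + 1) ^ (m + 1) := by
  induction m with
  | zero => simp
  | succ m ih =>
    have h1 : (0:ℝ) ≤ x ^ m := pow_nonneg hx m
    have h2 : (0:ℝ) ≤ x ^ (m + 1) := pow_nonneg hx _
    have hx1 : (0:ℝ) ≤ x + 1 := by linarith
    have key := mul_le_mul_of_nonneg_right ih hx1
    have e1 : (x + 1) ^ (m + 1) * (x + 1) = (x + 1) ^ (m + 2) := by rw [← pow_succ]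
    have e2 : x ^ (m + 1) * x = x ^ (m + 2) := by rw [← pow_succ]
    have e3 : x ^ m * x = x ^ (m + 1) := by rw [← pow_succ]
    push_cast at key ⊢
    nlinarith [key]

lemma sumpow (m n : ℕ) :
    ((m : ℝ) + 1) * ∑ q ∈ Finset.range n, (q : ℝ) ^ m ≤ (n : ℝ) ^ (m + 1) := by
  induction n with
  | zero => simp
  | succ n ih =>
    rw [Finset.sum_range_succ]
    have hb := bin_aux m (n : ℝ) (by positivity)
    push_cast
    nlinarith [ih, hb]

lemma dfac_succ (j : ℕ) : (2 * (j + 1) - 1)‼ = (2 * j + 1) * (2 * j - 1)‼ := by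
  cases j with
  | zero => simp [Nat.doubleFactorial]
  | succ jj =>
    have e1 : 2 * (jj + 1 + 1) - 1 = (2 * jj + 1) + 2 := by omega
    have e2 : 2 * (jj + 1) - 1 = 2 * jj + 1 := by omega
    rw [e1, e2, Nat.doubleFactorial_add_two]
    have e3 : 2 * jj + 1 + 2 = 2 * (jj + 1) + 1 := by omega
    rw [e3]

lemma dfac_pos_real (j : ℕ) : (0:ℝ) < ((2 * j - 1)‼ : ℝ) := by
  exact_mod_cast Nat.doubleFactorial_pos _

lemma num_lemma (j n : ℕ) (hn : 1 ≤ n) :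
    ((n : ℝ) + 1) * (∑ q ∈ Finset.range n, (2 * (q : ℝ) ^ 2) ^ j / ((2 * j - 1)‼ : ℝ)) ≤
      (2 * (n : ℝ) ^ 2) ^ (j + 1) / ((2 * (j + 1) - 1)‼ : ℝ) := by
  have hdj := dfac_pos_real j
  have hdj1 : ((2 * (j + 1) - 1)‼ : ℝ) = (2 * (j : ℝ) + 1) * ((2 * j - 1)‼ : ℝ) := by
    rw [dfac_succ]
    push_cast
    ring
  have hS : (∑ q ∈ Finset.range n, (2 * (q : ℝ) ^ 2) ^ j) =
      2 ^ j * ∑ q ∈ Finset.range n, (q : ℝ) ^ (2 * j) := by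
    rw [Finset.mul_sum]
    refine Finset.sum_congr rfl fun q _ => ?_
    rw [mul_pow, ← pow_mul]
  have hsp := sumpow (2 * j) n
  set S := ∑ q ∈ Finset.range n, (q : ℝ) ^ (2 * j) with hSdef
  have hS0 : 0 ≤ S := Finset.sum_nonneg fun q _ => by positivity
  have hsum : (∑ q ∈ Finset.range n, (2 * (q : ℝ) ^ 2) ^ j / ((2 * j - 1)‼ : ℝ)) =
      2 ^ j * S / ((2 * j - 1)‼ : ℝ) := by
    rw [← Finset.sum_div, hS]
  rw [hsum, hdj1, mul_div_assoc']
  rw [div_le_div_iff₀ hdj (by positivity)]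
  have h2j : (0:ℝ) < 2 ^ j := by positivity
  have hn1 : (1:ℝ) ≤ (n : ℝ) := by exact_mod_cast hn
  have hkey : (2 * (j:ℝ) + 1) * S ≤ (n : ℝ) ^ (2 * j + 1) := by
    push_cast at hsp
    convert hsp using 2
  have hpow1 : (2 * (n : ℝ) ^ 2) ^ (j + 1) = 2 * 2 ^ j * ((n : ℝ) ^ (2 * j + 1) * n) := by
    rw [mul_pow, ← pow_mul]
    have : (n:ℝ) ^ (2 * (j + 1)) = (n : ℝ) ^ (2 * j + 1) * n := by
      rw [← pow_succ, show 2 * (j + 1) = 2 * j + 1 + 1 from by omega]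
    rw [this]
    ring
  rw [hpow1]
  have hnp : (0:ℝ) ≤ (n : ℝ) ^ (2 * j + 1) := by positivity
  set P := (n : ℝ) ^ (2 * j + 1) with hP
  have c1 : ((n:ℝ)+1) * ((2*(j:ℝ)+1) * S) ≤ ((n:ℝ)+1) * P :=
    mul_le_mul_of_nonneg_left hkey (by linarith)
  have c2 : ((n:ℝ)+1) * P ≤ (2*(n:ℝ)) * P := mul_le_mul_of_nonneg_right (by linarith) hnp
  have c3 := mul_le_mul_of_nonneg_right (c1.trans c2) (le_of_lt (mul_pos h2j hdj))
  nlinarith [c3]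

lemma main_ind
    (hLbx : ∀ β : FL × FL, Lb β (FreeLieAlgebra.of ℝ true) = ⁅β.1, FreeLieAlgebra.of ℝ true⁆)
    (hLby : ∀ β : FL × FL, Lb β (FreeLieAlgebra.of ℝ false) = ⁅β.2, FreeLieAlgebra.of ℝ false⁆)
    (hbr : ∀ β γ : FL × FL, br β γ =
      (Lb β γ.1 - Lb γ β.1 + ⁅β.1, γ.1⁆, Lb β γ.2 - Lb γ β.2 + ⁅β.2, γ.2⁆))
    (D : ℝ) (hD : 0 < D) :
    ∀ (bs : List (ℕ → FL × FL)), (∀ β ∈ bs, ∀ n, HomogP n (β n)) →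
      (∀ β ∈ bs, ∀ n, 1 ≤ n → CnP n (β n) ≤ D ^ n) →
      ∀ (j : ℕ) (γ : ℕ → FL × FL), (∀ n, HomogP n (γ n)) →
      (∀ n, 1 ≤ n → CnP n (γ n) ≤ (2 * (n:ℝ)^2)^j / ((2*j-1)‼ : ℝ) * D ^ n) →
      (∀ n, HomogP n (adIter br bs γ n)) ∧
      ∀ n, 1 ≤ n → CnP n (adIter br bs γ n) ≤
        (2 * (n:ℝ)^2)^(j + bs.length) / ((2*(j + bs.length)-1)‼ : ℝ) * D ^ n := by
  intro bs
  induction bs with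
  | nil =>
    intro _ _ j γ hγh hγC
    exact ⟨hγh, by simpa [adIter] using hγC⟩
  | cons β bs ih =>
    intro hh hC j γ hγh hγC
    have hβh : ∀ n, HomogP n (β n) := hh β List.mem_cons_self
    have hβC : ∀ n, 1 ≤ n → CnP n (β n) ≤ D ^ n := hC β List.mem_cons_self
    set f : ℕ → ℝ := fun q => (2 * (q:ℝ)^2)^j / ((2*j-1)‼ : ℝ) with hf
    have hfn : ∀ q, 0 ≤ f q := by
      intro q
      have := dfac_pos_real j
      positivity
    have hs := step hLbx hLby hbr D hD β γ hβh hβC hγh f hfn hγC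
    have hnew : ∀ n, 1 ≤ n → CnP n (brFam br β γ n) ≤
        (2 * (n:ℝ)^2)^(j+1) / ((2*(j+1)-1)‼ : ℝ) * D ^ n := by
      intro n hn
      refine (hs.2 n hn).trans ?_
      have hnum := num_lemma j n hn
      have hD' : (0:ℝ) ≤ D ^ n := by positivity
      calc ((n : ℝ) + 1) * (∑ q ∈ Finset.range n, f q) * D ^ n
          = (((n : ℝ) + 1) * ∑ q ∈ Finset.range n, f q) * D ^ n := by ring
        _ ≤ (2 * (n:ℝ)^2)^(j+1) / ((2*(j+1)-1)‼ : ℝ) * D ^ n :=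
          mul_le_mul_of_nonneg_right hnum hD'
    have htail1 : ∀ β' ∈ bs, ∀ n, HomogP n (β' n) :=
      fun β' hβ' => hh β' (List.mem_cons_of_mem _ hβ')
    have htail2 : ∀ β' ∈ bs, ∀ n, 1 ≤ n → CnP n (β' n) ≤ D ^ n :=
      fun β' hβ' => hC β' (List.mem_cons_of_mem _ hβ')
    have hres := ih htail1 htail2 (j + 1) (brFam br β γ) hs.1 hnew
    have hfold : adIter br (β :: bs) γ = adIter br bs (brFam br β γ) := rfl
    rw [hfold]
    have hlen : j + 1 + bs.length = j + (β :: bs).length := by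
      simp [List.length_cons]; omega
    rw [hlen] at hres
    exact hres


end Aux

/-- If `C_n(β_i) ≤ Dⁿ` and `C_n(γ) ≤ Dⁿ` for all `n ≥ 1`, then
`C_n(ad_{β_k} ⋯ ad_{β_1} γ) ≤ (2n²)^k/(2k−1)!! · Dⁿ`, the adjoint action being taken with
respect to the modified bracket `[β,γ] = L_β γ − L_γ β + [β,γ]_0`. -/
theorem stmt3
    (Lb : FL × FL → LieDerivation ℝ FL FL)
    (hLbx : ∀ β : FL × FL, Lb β (FreeLieAlgebra.of ℝ true) = ⁅β.1, FreeLieAlgebra.of ℝ true⁆)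
    (hLby : ∀ β : FL × FL, Lb β (FreeLieAlgebra.of ℝ false) = ⁅β.2, FreeLieAlgebra.of ℝ false⁆)
    (br : FL × FL → FL × FL → FL × FL)
    (hbr : ∀ β γ : FL × FL, br β γ =
      (Lb β γ.1 - Lb γ β.1 + ⁅β.1, γ.1⁆, Lb β γ.2 - Lb γ β.2 + ⁅β.2, γ.2⁆))
    (D : ℝ) (hD : 0 < D)
    (bs : List (ℕ → FL × FL)) (γ : ℕ → FL × FL)
    (hhombs : ∀ β ∈ bs, ∀ n, HomogP n (β n))
    (hhomγ : ∀ n, HomogP n (γ n))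
    (hCbs : ∀ β ∈ bs, ∀ n : ℕ, 1 ≤ n → CnP n (β n) ≤ D ^ n)
    (hCγ : ∀ n : ℕ, 1 ≤ n → CnP n (γ n) ≤ D ^ n) :
    ∀ n : ℕ, 1 ≤ n →
      CnP n (adIter br bs γ n)
        ≤ (2 * (n : ℝ) ^ 2) ^ bs.length / ((2 * bs.length - 1)‼ : ℝ) * D ^ n := by
  intro n hn
  have hγ0 : ∀ n, 1 ≤ n → CnP n (γ n) ≤ (2 * (n:ℝ)^2)^0 / ((2*0-1)‼ : ℝ) * D ^ n := by
    intro n hn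
    simpa [Nat.doubleFactorial] using hCγ n hn
  have := (main_ind hLbx hLby hbr D hD bs hhombs hCbs 0 γ hhomγ hγ0).2 n hn
  simpa using this
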